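/- Let (A, ≻, ≺) be a finite-dimensional anti-dendriform algebra and r ∈ A⊗A. The following are equivalent: (1) r + τ(r) is invariant; (2) L_·(x)T_{r+τ(r)}(ζ) = -T_{r+τ(r)}(R_≺*(x)ζ) and L_≻(x)T_{r+τ(r)}(ζ) = -T_{r+τ(r)}(R_·*(x)ζ) for all x ∈ A, ζ ∈ A*; (3) T_{r+τ(r)}(L_·*(x)ζ) = -R_≺(x)T_{r+τ(r)}(ζ) and T_{r+τ(r)}(L_≻*(x)ζ) = -R_·(x)T_{r+τ(r)}(ζ) for all x ∈ A, ζ ∈ A*. -/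

import Mathlib

open TensorProduct

set_option synthInstance.maxHeartbeats 1000000
set_option maxHeartbeats 1600000

variable {K : Type*} [Field K]

/-- The anti-dendriform algebra identities for two bilinear operations `s` (≻) and `p` (≺):
`x≻(y≻z) = -(x·y)≻z = -x≺(y·z) = (x≺y)≺z` and `(x≻y)≺z = x≻(y≺z)`, where `x·y = x≻y + x≺y`. -/
def IsAntiDend {M : Type*} [AddCommGroup M] [Module K M]
    (s p : M →ₗ[K] M →ₗ[K] M) : Prop :=
  ∀ x y z : M,
    s x (s y z) = - s (s x y + p x y) z ∧
    s x (s y z) = - p x (s y z + p y z) ∧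
    s x (s y z) = p (p x y) z ∧
    p (s x y) z = s x (p y z)

/-- The bilinear map `a ⊗ b ↦ (ζ ↦ ζ(a) • b)` used to define `T_r`. -/
noncomputable def Tbil {M : Type*} [AddCommGroup M] [Module K M] :
    M →ₗ[K] M →ₗ[K] (Module.Dual K M →ₗ[K] M) :=
  LinearMap.mk₂ K (fun a b => (Module.Dual.eval K M a).smulRight b)
    (fun a a' b => by ext ζ; simp [add_smul])
    (fun c a b => by
      ext ζ
      simp only [LinearMap.smulRight_apply, LinearMap.smul_apply, map_smul,
        Module.Dual.eval_apply, smul_eq_mul, mul_smul])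
    (fun a b b' => by ext ζ; simp)
    (fun c a b => by
      ext ζ
      simp only [LinearMap.smulRight_apply, LinearMap.smul_apply]
      exact smul_comm _ _ _)

/-- `T_r : A* → A`, `⟨T_r ζ, η⟩ = ⟨r, ζ ⊗ η⟩`; concretely `T_r ζ = Σ ζ(aᵢ) • bᵢ`
for `r = Σ aᵢ ⊗ bᵢ`. -/
noncomputable def TmL {M : Type*} [AddCommGroup M] [Module K M] (r : M ⊗[K] M) :
    Module.Dual K M →ₗ[K] M :=
  TensorProduct.lift Tbil r

/-- The flip `τ : A ⊗ A → A ⊗ A`. -/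
noncomputable def tau {M : Type*} [AddCommGroup M] [Module K M] (r : M ⊗[K] M) : M ⊗[K] M :=
  TensorProduct.comm K M M r

/-- `r` is invariant: `(R_≺(x)⊗I + I⊗L_·(x)) r = 0` and `(R_·(x)⊗I + I⊗L_≻(x)) r = 0`. -/
def Invariant {M : Type*} [AddCommGroup M] [Module K M]
    (s p : M →ₗ[K] M →ₗ[K] M) (r : M ⊗[K] M) : Prop :=
  ∀ x : M,
    TensorProduct.map (p.flip x) (LinearMap.id : M →ₗ[K] M) r
      + TensorProduct.map (LinearMap.id : M →ₗ[K] M) ((s + p) x) r = 0 ∧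
    TensorProduct.map ((s + p).flip x) (LinearMap.id : M →ₗ[K] M) r
      + TensorProduct.map (LinearMap.id : M →ₗ[K] M) (s x) r = 0

variable {A : Type*} [AddCommGroup A] [Module K A]

lemma TmL_add {M : Type*} [AddCommGroup M] [Module K M] (u v : M ⊗[K] M) :
    TmL (u + v) = TmL u + TmL v :=
  map_add (TensorProduct.lift Tbil) u v

lemma TmL_tmul {M : Type*} [AddCommGroup M] [Module K M] (a b : M) (ζ : Module.Dual K M) :
    TmL (a ⊗ₜ[K] b) ζ = ζ a • b := by
  simp [TmL, Tbil]

lemma TmL_map_left (f : A →ₗ[K] A) (t : A ⊗[K] A) :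
    TmL (TensorProduct.map f LinearMap.id t) = TmL t ∘ₗ f.dualMap := by
  induction t using TensorProduct.induction_on with
  | zero => simp [TmL]
  | tmul a b => ext ζ; simp [TmL, Tbil]
  | add x y hx hy =>
      rw [map_add, TmL_add, TmL_add, hx, hy, LinearMap.add_comp]

lemma TmL_map_right (g : A →ₗ[K] A) (t : A ⊗[K] A) :
    TmL (TensorProduct.map LinearMap.id g t) = g ∘ₗ TmL t := by
  induction t using TensorProduct.induction_on with
  | zero => simp [TmL]
  | tmul a b => ext ζ; simp [TmL, Tbil]
  | add x y hx hy =>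
      rw [map_add, TmL_add, TmL_add, hx, hy, LinearMap.comp_add]

lemma TmL_symm (t : A ⊗[K] A) (ζ η : Module.Dual K A) :
    η (TmL (t + tau t) ζ) = ζ (TmL (t + tau t) η) := by
  induction t using TensorProduct.induction_on with
  | zero => simp [tau, TmL]
  | tmul a b =>
      simp only [tau, TensorProduct.comm_tmul, TmL_add, LinearMap.add_apply, TmL_tmul,
        map_add, map_smul, smul_eq_mul]
      ring
  | add x y hx hy =>
      have heq : (x + y) + tau (x + y) = (x + tau x) + (y + tau y) := by
        simp only [tau, map_add]; abel
      rw [heq, TmL_add]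
      simp only [LinearMap.add_apply, map_add]
      rw [hx, hy]

lemma TmL_eq_zero_iff [FiniteDimensional K A] (t : A ⊗[K] A) :
    TmL t = 0 ↔ t = 0 := by
  have key : ∀ u : A ⊗[K] A, TmL u = dualTensorHom K (Module.Dual K A) A
      ((TensorProduct.congr (Module.evalEquiv K A) (LinearEquiv.refl K A)).toLinearMap u) := by
    intro u
    induction u using TensorProduct.induction_on with
    | zero => simp [TmL]
    | tmul a b => ext ζ; simp [TmL, Tbil]
    | add x y hx hy => rw [TmL_add, map_add, map_add, hx, hy]
  constructor
  · intro ht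
    have hinj : Function.Injective (dualTensorHom K (Module.Dual K A) A) := by
      intro u v huv
      apply (dualTensorHomEquiv K (Module.Dual K A) A).injective
      simpa [dualTensorHomEquiv] using huv
    have h1 : (TensorProduct.congr (Module.evalEquiv K A) (LinearEquiv.refl K A)).toLinearMap t
        = 0 := hinj (by rw [← key t, ht, map_zero])
    exact (TensorProduct.congr (Module.evalEquiv K A) (LinearEquiv.refl K A)).injective
      (by rw [map_zero]; exact h1)
  · intro ht; simp [ht, TmL]

lemma dual_ext' [FiniteDimensional K A] {u v : A}
    (h : ∀ η : Module.Dual K A, η u = η v) : u = v := by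
  have h0 : ∀ η : Module.Dual K A, η (u - v) = 0 := by
    intro η; simp [h η]
  exact sub_eq_zero.mp ((Module.forall_dual_apply_eq_zero_iff K (u - v)).mp h0)

/-- for `s' = r + τ(r)`, the following are equivalent:
(1) `s'` is invariant; (2) `L_·(x)T_{s'}(ζ) = -T_{s'}(R_≺*(x)ζ)` and
`L_≻(x)T_{s'}(ζ) = -T_{s'}(R_·*(x)ζ)`; (3) `T_{s'}(L_·*(x)ζ) = -R_≺(x)T_{s'}(ζ)` and
`T_{s'}(L_≻*(x)ζ) = -R_·(x)T_{s'}(ζ)`. -/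
theorem stmt5 [FiniteDimensional K A]
    (s p : A →ₗ[K] A →ₗ[K] A) (h : IsAntiDend s p) (r : A ⊗[K] A) :
    (Invariant s p (r + tau r) ↔
      ∀ (x : A) (ζ : Module.Dual K A),
        (s + p) x (TmL (r + tau r) ζ) = - TmL (r + tau r) ((p.flip x).dualMap ζ) ∧
        s x (TmL (r + tau r) ζ) = - TmL (r + tau r) (((s + p).flip x).dualMap ζ)) ∧
    (Invariant s p (r + tau r) ↔
      ∀ (x : A) (ζ : Module.Dual K A),
        TmL (r + tau r) (((s + p) x).dualMap ζ) = - p.flip x (TmL (r + tau r) ζ) ∧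
        TmL (r + tau r) ((s x).dualMap ζ) = - (s + p).flip x (TmL (r + tau r) ζ)) := by
  set t : A ⊗[K] A := r + tau r with ht
  have sym : ∀ ζ η : Module.Dual K A, η (TmL t ζ) = ζ (TmL t η) := fun ζ η => TmL_symm r ζ η
  have key : ∀ (f g : A →ₗ[K] A),
      (TensorProduct.map f LinearMap.id t + TensorProduct.map LinearMap.id g t = 0) ↔
      ∀ ζ : Module.Dual K A, g (TmL t ζ) = - TmL t (f.dualMap ζ) := by
    intro f g
    rw [← TmL_eq_zero_iff, TmL_add, TmL_map_left, TmL_map_right, LinearMap.ext_iff]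
    constructor
    · intro h0 ζ
      have h1 := h0 ζ
      simp only [LinearMap.add_apply, LinearMap.comp_apply, LinearMap.zero_apply] at h1
      exact eq_neg_of_add_eq_zero_right h1
    · intro h0 ζ
      simp only [LinearMap.add_apply, LinearMap.comp_apply, LinearMap.zero_apply]
      rw [h0 ζ]; abel
  have h12 : Invariant s p t ↔
      ∀ (x : A) (ζ : Module.Dual K A),
        (s + p) x (TmL t ζ) = - TmL t ((p.flip x).dualMap ζ) ∧
        s x (TmL t ζ) = - TmL t (((s + p).flip x).dualMap ζ) := by
    constructor
    · intro hI x ζ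
      exact ⟨(key _ _).mp (hI x).1 ζ, (key _ _).mp (hI x).2 ζ⟩
    · intro h2 x
      exact ⟨(key _ _).mpr (fun ζ => (h2 x ζ).1), (key _ _).mpr (fun ζ => (h2 x ζ).2)⟩
  have adj : ∀ (f g : A →ₗ[K] A),
      (∀ ζ : Module.Dual K A, g (TmL t ζ) = - TmL t (f.dualMap ζ)) →
      ∀ ζ : Module.Dual K A, TmL t (g.dualMap ζ) = - f (TmL t ζ) := by
    intro f g h2 ζ
    apply dual_ext' (K := K)
    intro η
    calc η (TmL t (g.dualMap ζ))
        = (g.dualMap ζ) (TmL t η) := sym _ _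
      _ = ζ (g (TmL t η)) := rfl
      _ = ζ (- TmL t (f.dualMap η)) := by rw [h2 η]
      _ = - ((f.dualMap η) (TmL t ζ)) := by rw [map_neg, sym]
      _ = η (- f (TmL t ζ)) := by simp
  have adj' : ∀ (f g : A →ₗ[K] A),
      (∀ ζ : Module.Dual K A, TmL t (g.dualMap ζ) = - f (TmL t ζ)) →
      ∀ ζ : Module.Dual K A, g (TmL t ζ) = - TmL t (f.dualMap ζ) := by
    intro f g h3 ζ
    apply dual_ext' (K := K)
    intro η
    calc η (g (TmL t ζ))
        = (g.dualMap η) (TmL t ζ) := rfl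
      _ = ζ (TmL t (g.dualMap η)) := sym ζ _
      _ = ζ (- f (TmL t η)) := by rw [h3 η]
      _ = - ((f.dualMap ζ) (TmL t η)) := by rw [map_neg]; rfl
      _ = η (- TmL t (f.dualMap ζ)) := by rw [map_neg, sym η (f.dualMap ζ)]
  refine ⟨h12, h12.trans ⟨fun h2 x ζ => ⟨adj _ _ (fun ξ => (h2 x ξ).1) ζ,
      adj _ _ (fun ξ => (h2 x ξ).2) ζ⟩,
    fun h3 x ζ => ⟨adj' _ _ (fun ξ => (h3 x ξ).1) ζ, adj' _ _ (fun ξ => (h3 x ξ).2) ζ⟩⟩⟩
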